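/- For every integer t ≥ 1 and every integer i with 1 ≤ i ≤ t, one has α_t^i ≤ 2H/t. -/

import Mathlib

/-- The learning rate `α_t = (H+1)/(H+t)`. -/
noncomputable def lrate (H t : ℕ) : ℝ := (H + 1) / (H + t)

/-- The weight `α_t^i = α_i · ∏_{j=i+1}^t (1 − α_j)`. -/
noncomputable def lrateW (H t i : ℕ) : ℝ :=
  lrate H i * ∏ j ∈ Finset.Icc (i + 1) t, (1 - lrate H j)

lemma lrate_nonneg (H j : ℕ) : 0 ≤ lrate H j := by
  unfold lrate; positivity

lemma lrate_le_one (H j : ℕ) (hj : 1 ≤ j) : lrate H j ≤ 1 := by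
  unfold lrate
  have hj' : (1:ℝ) ≤ j := by exact_mod_cast hj
  apply div_le_one_of_le₀ <;> nlinarith [Nat.cast_nonneg (α := ℝ) H]

lemma key (H i : ℕ) (hi : 1 ≤ i) (t : ℕ) (hit : i ≤ t) :
    lrateW H t i ≤ lrate H t := by
  induction t, hit using Nat.le_induction with
  | base =>
      unfold lrateW
      rw [Finset.Icc_eq_empty (by omega), Finset.prod_empty, mul_one]
  | succ t ht ih =>
      have h1 : 0 ≤ 1 - lrate H (t + 1) := by
        have := lrate_le_one H (t + 1) (by omega)
        linarith
      have hstep : lrateW H (t + 1) i = lrateW H t i * (1 - lrate H (t + 1)) := by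
        unfold lrateW
        rw [Finset.prod_Icc_succ_top (by omega : i + 1 ≤ t + 1)]
        ring
      rw [hstep]
      calc lrateW H t i * (1 - lrate H (t + 1))
          ≤ lrate H t * (1 - lrate H (t + 1)) := by
            exact mul_le_mul_of_nonneg_right ih h1
        _ ≤ lrate H (t + 1) := by
            unfold lrate
            have ht' : (1:ℝ) ≤ t := by exact_mod_cast ht.trans' hi
            have hH' : (0:ℝ) ≤ H := Nat.cast_nonneg H
            have ha : (0:ℝ) < (H:ℝ) + t := by linarith
            have hb : (0:ℝ) < (H:ℝ) + (t + 1 : ℕ) := by push_cast; linarith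
            push_cast
            have hb2 : (0:ℝ) < (H:ℝ) + ((t:ℝ) + 1) := by linarith
            have e : (1:ℝ) - ((H:ℝ) + 1) / ((H:ℝ) + ((t:ℝ) + 1)) =
                (t:ℝ) / ((H:ℝ) + ((t:ℝ) + 1)) := by
              field_simp
              ring
            rw [e, div_mul_div_comm, div_le_div_iff₀ (by positivity) hb2]
            nlinarith [mul_nonneg (mul_nonneg (by linarith : (0:ℝ) ≤ (H:ℝ) + 1)
              (le_of_lt hb2)) hH']

theorem stmt_1 (H : ℕ) (hH : 1 ≤ H) (t : ℕ) (ht : 1 ≤ t)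
    (i : ℕ) (hi : 1 ≤ i) (hit : i ≤ t) :
    lrateW H t i ≤ 2 * H / t := by
  have h1 := key H i hi t hit
  have h2 : lrate H t ≤ 2 * H / t := by
    unfold lrate
    have ht' : (1:ℝ) ≤ t := by exact_mod_cast ht
    have hH' : (1:ℝ) ≤ H := by exact_mod_cast hH
    rw [div_le_div_iff₀ (by linarith) (by linarith)]
    nlinarith
  linarith
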